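/- Let 𝔴 be the Lie algebra spanned by a_n, β_n, γ_n (n ∈ ℤ) and a central element I with commutators [γ_m, β_n] = δ_{m+n}·I and [a_m, a_n] = (m/2)·δ_{m+n}·I. Fix κ ≠ 0 and j ∈ ℂ, set k = κ² − 2, and let 𝒲^{κ,j} be the quotient of U𝔴 by the left ideal generated by a₀ − κ^{-1}j, I − 1, and all β_n (n ≥ 0), γ_n (n ≥ 1), a_n (n ≥ 1). Define operators J⁺_n = β_n, J⁰_n = ∑_m :γ_{−m}β_{n+m}: + κ·a_n, and J⁻_n via the Wakimoto formula J⁻ = −:γ²β: − 2κγ∂φ − k∂γ (in modes). Then these operators satisfy the sl2-hat relations at level k, and the image w of 1 satisfies J⁰₀·w = j·w and is annihilated by J⁺₀ and by all J^a_n with n > 0. -/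
import Mathlib

open Function

namespace Stmt7Aux

variable {M : Type*} [AddCommGroup M]

lemma finZ {f : ℤ → M} (L R : ℤ) (h : ∀ p, f p ≠ 0 → L ≤ p ∧ p ≤ R) :
    (support f).Finite := by
  apply Set.Finite.subset (Set.finite_Icc L R)
  intro p hp
  exact Set.mem_Icc.2 (h p hp)

lemma finZ2 {F : ℤ × ℤ → M} (L R : ℤ)
    (h : ∀ p q, F (p, q) ≠ 0 → L ≤ p ∧ p ≤ R ∧ L ≤ q ∧ q ≤ R) :
    (support F).Finite := by
  apply Set.Finite.subset ((Set.finite_Icc L R).prod (Set.finite_Icc L R))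
  rintro ⟨p, q⟩ hp
  obtain ⟨h1, h2, h3, h4⟩ := h p q hp
  exact ⟨Set.mem_Icc.2 ⟨h1, h2⟩, Set.mem_Icc.2 ⟨h3, h4⟩⟩

lemma finsum_shift (f : ℤ → M) (t : ℤ) : ∑ᶠ p : ℤ, f (p + t) = ∑ᶠ p : ℤ, f p :=
  finsum_comp_equiv (Equiv.addRight t)

lemma finsum_shift2snd (F : ℤ × ℤ → M) (t : ℤ) :
    ∑ᶠ pq : ℤ × ℤ, F (pq.1, pq.2 + t) = ∑ᶠ pq : ℤ × ℤ, F pq :=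
  finsum_comp_equiv ((Equiv.refl ℤ).prodCongr (Equiv.addRight t))

lemma finsum_shift2fst (F : ℤ × ℤ → M) (t : ℤ) :
    ∑ᶠ pq : ℤ × ℤ, F (pq.1 + t, pq.2) = ∑ᶠ pq : ℤ × ℤ, F pq :=
  finsum_comp_equiv ((Equiv.addRight t).prodCongr (Equiv.refl ℤ))

lemma finsum_neg2 (F : ℤ → M) : ∑ᶠ p : ℤ, F (-p) = ∑ᶠ p : ℤ, F p :=
  finsum_comp_equiv (Equiv.neg ℤ)

lemma finsum_line_fst (h : ℤ → M) (c : ℤ) (hh : (support h).Finite) :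
    ∑ᶠ pq : ℤ × ℤ, (if pq.1 = c then h pq.2 else 0) = ∑ᶠ q : ℤ, h q := by
  classical
  have hsub : support (fun pq : ℤ × ℤ => if pq.1 = c then h pq.2 else 0)
      ⊆ ↑({c} ×ˢ hh.toFinset : Finset (ℤ × ℤ)) := by
    rintro ⟨p, q⟩ hpq
    simp only [mem_support] at hpq
    have hp : p = c := by by_contra hp; simp [hp] at hpq
    subst hp
    rw [if_pos rfl] at hpq
    simp only [Finset.coe_product, Set.mem_prod, Finset.coe_singleton,
      Set.mem_singleton_iff, Set.Finite.coe_toFinset, mem_support]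
    exact ⟨trivial, hpq⟩
  rw [finsum_eq_sum_of_support_subset _ hsub, Finset.sum_product,
    Finset.sum_singleton]
  rw [finsum_eq_sum_of_support_subset h (s := hh.toFinset) (by simp [Set.Finite.coe_toFinset])]
  exact Finset.sum_congr rfl fun q _ => by simp

lemma finsum_line_snd (h : ℤ → M) (c : ℤ) (hh : (support h).Finite) :
    ∑ᶠ pq : ℤ × ℤ, (if pq.2 = c then h pq.1 else 0) = ∑ᶠ q : ℤ, h q := by
  rw [← finsum_line_fst h c hh]
  exact (finsum_comp_equiv (Equiv.prodComm ℤ ℤ)).symm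

lemma tele (g : ℤ → M) (c : M) (A B : ℤ) (hA : ∀ p, p ≤ A → g p = c)
    (hB : ∀ p, B ≤ p → g p = 0) (m : ℤ) :
    ∑ᶠ p : ℤ, (g p - g (p - m)) = -m • c := by
  classical
  have hfin : ∀ t : ℤ, (support fun p => g p - g (p - t)).Finite := by
    intro t
    apply finZ (min A (A + t)) (max B (B + t))
    intro p hp
    constructor
    · by_contra hc
      push_neg at hc
      have h1 : g p = c := hA p (by omega)
      have h2 : g (p - t) = c := hA _ (by omega)
      exact hp (by rw [h1, h2, sub_self])
    · by_contra hc
      push_neg at hc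
      have h1 : g p = 0 := hB p (by omega)
      have h2 : g (p - t) = 0 := hB _ (by omega)
      exact hp (by rw [h1, h2, sub_self])
  have hadd : ∀ t s : ℤ, (∑ᶠ p : ℤ, (g p - g (p - (t + s))))
      = (∑ᶠ p : ℤ, (g p - g (p - t))) + ∑ᶠ p : ℤ, (g p - g (p - s)) := by
    intro t s
    have he : (fun p : ℤ => g p - g (p - (t + s)))
        = fun p => (g p - g (p - t)) + ((fun x => g x - g (x - s)) (p + -t)) := by
      funext p
      show g p - g (p - (t + s)) = g p - g (p - t) + (g (p + -t) - g (p + -t - s))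
      rw [show p + -t = p - t from by ring, show p - t - s = p - (t + s) from by ring]
      abel
    rw [he, finsum_add_distrib (hfin t) (by
      have := (hfin s).preimage (f := fun p : ℤ => p + -t)
        (Set.injOn_of_injective (fun x y h => by omega))
      exact this.subset (by intro p hp; simpa using hp))]
    congr 1
    exact finsum_shift (fun x => g x - g (x - s)) (-t)
  set F : ℤ →+ M := AddMonoidHom.mk' (fun t => ∑ᶠ p : ℤ, (g p - g (p - t))) hadd with hF
  show F m = -m • c
  have hm : F m = m • F 1 := by
    have : (m : ℤ) = m • (1 : ℤ) := by simp
    rw [show F m = F (m • (1:ℤ)) by rw [← this], map_zsmul]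
  rw [hm]
  -- compute F 1
  have hF1 : F 1 = -c := by
    show (∑ᶠ p : ℤ, (g p - g (p - 1))) = -c
    set L : ℤ := A + 1
    set U : ℤ := max B (A + 1)
    have hsub : support (fun p => g p - g (p - 1)) ⊆ ↑(Finset.Icc L U) := by
      intro p hp
      simp only [mem_support] at hp
      simp only [Finset.coe_Icc, Set.mem_Icc]
      constructor
      · by_contra hc; push_neg at hc
        rw [hA p (by omega), hA (p-1) (by omega), sub_self] at hp
        exact hp rfl
      · by_contra hc; push_neg at hc
        rw [hB p (by omega), hB (p-1) (by omega), sub_self] at hp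
        exact hp rfl
    rw [finsum_eq_sum_of_support_subset _ hsub, Finset.sum_sub_distrib]
    have hmap : ∑ p ∈ Finset.Icc L U, g (p - 1) = ∑ p ∈ Finset.Icc (L-1) (U-1), g p := by
      rw [show (L - 1 : ℤ) = L + -1 from by ring, show (U - 1 : ℤ) = U + -1 from by ring,
        ← Finset.map_add_right_Icc L U (-1), Finset.sum_map]
      exact Finset.sum_congr rfl fun p _ => by
        simp [addRightEmbedding, sub_eq_add_neg]
    rw [hmap]
    have hLU : L ≤ U := by omega
    have h1 : Finset.Icc L U = insert U (Finset.Icc L (U - 1)) := by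
      ext x; simp only [Finset.mem_Icc, Finset.mem_insert]; omega
    have h2 : Finset.Icc (L-1) (U-1) = insert (L-1) (Finset.Icc L (U - 1)) := by
      ext x; simp only [Finset.mem_Icc, Finset.mem_insert]; omega
    rw [h1, h2, Finset.sum_insert (by simp), Finset.sum_insert (by simp)]
    rw [hB U (by omega), hA (L-1) (by omega)]
    abel
  rw [hF1]
  rw [smul_neg, neg_smul]

variable {M : Type*} [AddCommGroup M]

section Defs
variable [Module ℂ M]

def T0 (β γ : ℤ → Module.End ℂ M) (n q : ℤ) (v : M) : M :=
  if 0 ≤ n + q then γ (-q) (β (n + q) v) else β (n + q) (γ (-q) v)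

def Tg (a γ : ℤ → Module.End ℂ M) (n q : ℤ) (v : M) : M :=
  if 1 ≤ q then γ (n - q) (a q v) else a q (γ (n - q) v)

def Tc (β γ : ℤ → Module.End ℂ M) (n : ℤ) (pq : ℤ × ℤ) (v : M) : M :=
  if 0 ≤ n - pq.1 - pq.2 then γ pq.1 (γ pq.2 (β (n - pq.1 - pq.2) v))
  else β (n - pq.1 - pq.2) (γ pq.1 (γ pq.2 v))

lemma endo_finsum {ι : Type*} (f : Module.End ℂ M) {g : ι → M} (hg : (support g).Finite) :
    f (∑ᶠ i, g i) = ∑ᶠ i, f (g i) :=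
  f.toAddMonoidHom.map_finsum hg

variable {a β γ : ℤ → Module.End ℂ M}
variable (hloc : ∀ v : M, ∃ N : ℤ, ∀ n : ℤ, N ≤ n → a n v = 0 ∧ β n v = 0 ∧ γ n v = 0)
variable (hgb : ∀ i j (v : M), γ i (β j v) = β j (γ i v) + (if i + j = 0 then v else 0))
variable (hgg : ∀ i j (v : M), γ i (γ j v) = γ j (γ i v))

include hloc in
/-- good bound: `N ≥ 1` killing all three families -/
lemma goodN (v : M) : ∃ N : ℤ, 1 ≤ N ∧
    ∀ n : ℤ, N ≤ n → a n v = 0 ∧ β n v = 0 ∧ γ n v = 0 := by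
  obtain ⟨N, hN⟩ := hloc v
  exact ⟨max N 1, le_max_right _ _, fun n hn => hN n (le_trans (le_max_left _ _) hn)⟩

include hloc in
lemma finT0 (n : ℤ) (v : M) : (support fun q => T0 β γ n q v).Finite := by
  obtain ⟨N, hN1, hN⟩ := goodN (a := a) hloc v
  apply finZ (min (-n - 1) (-N)) (N - n)
  intro q hq
  constructor
  · by_contra hc; push_neg at hc
    apply hq
    rw [T0, if_neg (by omega), (hN (-q) (by omega)).2.2, map_zero]
  · by_contra hc; push_neg at hc
    apply hq
    rw [T0, if_pos (by omega), (hN (n + q) (by omega)).2.1, map_zero]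

include hloc in
lemma finTg (n : ℤ) (v : M) : (support fun q => Tg a γ n q v).Finite := by
  obtain ⟨N, hN1, hN⟩ := goodN (a := a) hloc v
  apply finZ (min 0 (n - N)) N
  intro q hq
  constructor
  · by_contra hc; push_neg at hc
    apply hq
    rw [Tg, if_neg (by omega), (hN (n - q) (by omega)).2.2, map_zero]
  · by_contra hc; push_neg at hc
    apply hq
    rw [Tg, if_pos (by omega), (hN q (by omega)).1, map_zero]

include hloc hgb hgg in
lemma finTc (m : ℤ) (v : M) : (support fun pq => Tc β γ m pq v).Finite := by
  obtain ⟨N, hN1, hN⟩ := goodN (a := a) hloc v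
  have hγv : ∀ x : ℤ, N ≤ x → γ x v = 0 := fun x hx => (hN x hx).2.2
  have hβv : ∀ x : ℤ, N ≤ x → β x v = 0 := fun x hx => (hN x hx).2.1
  -- vanishing when first γ index is large
  have key1 : ∀ p q r : ℤ, N ≤ p → 0 ≤ r → γ p (γ q (β r v)) = 0 := by
    intro p q r hp hr
    rw [hgg, hgb, hγv p hp, map_zero, if_neg (by omega), zero_add, map_zero]
  have key2 : ∀ p q r : ℤ, N ≤ q → 0 ≤ r → γ p (γ q (β r v)) = 0 := by
    intro p q r hq hr
    rw [hgb, hγv q hq, map_zero, if_neg (by omega), zero_add, map_zero]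
  apply finZ2 (m - 2 * N) N
  rintro p q hpq
  rw [Tc] at hpq
  simp only at hpq
  by_cases hr : 0 ≤ m - p - q
  · rw [if_pos hr] at hpq
    have hple : p ≤ N := by
      by_contra hc; push_neg at hc
      exact hpq (key1 p q _ (by omega) hr)
    have hqle : q ≤ N := by
      by_contra hc; push_neg at hc
      exact hpq (key2 p q _ (by omega) hr)
    have hrle : m - p - q ≤ N - 1 := by
      by_contra hc; push_neg at hc
      exact hpq (by rw [hβv (m - p - q) (by omega), map_zero, map_zero])
    exact ⟨by omega, by omega, by omega, by omega⟩
  · rw [if_neg hr] at hpq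
    have hple : p ≤ N := by
      by_contra hc; push_neg at hc
      exact hpq (by rw [hgg, hγv p (by omega), map_zero, map_zero])
    have hqle : q ≤ N := by
      by_contra hc; push_neg at hc
      exact hpq (by rw [hγv q (by omega), map_zero, map_zero])
    exact ⟨by omega, by omega, by omega, by omega⟩

lemma fin_comp {ι : Type*} (f : Module.End ℂ M) {g : ι → M} (hg : (support g).Finite) :
    (support fun i => f (g i)).Finite :=
  hg.subset (fun i hi => by
    simp only [mem_support] at hi ⊢
    exact fun h0 => hi (by rw [h0, map_zero]))

variable (hbb : ∀ i j (v : M), β i (β j v) = β j (β i v))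
variable (hab : ∀ i j (v : M), a i (β j v) = β j (a i v))
variable (hag : ∀ i j (v : M), a i (γ j v) = γ j (a i v))
variable (haa' : ∀ i j (v : M), a i (a j v) = a j (a i v) + (if i + j = 0 then ((i : ℂ)/2) else 0) • v)

include hgb in
lemma hbg : ∀ i j (v : M), β j (γ i v) = γ i (β j v) - (if i + j = 0 then v else 0) :=
  fun i j v => by rw [hgb i j v]; abel

include hgb hbb in
lemma T0_beta (n q r : ℤ) (v : M) :
    T0 β γ n q (β r v) - β r (T0 β γ n q v) = if q = r then β (n + r) v else 0 := by
  by_cases hqr : q = r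
  · subst hqr
    rw [if_pos rfl, T0, T0]
    split_ifs with h
    · rw [hbb (n+q) q v, hgb (-q) q (β (n+q) v), if_pos (by omega : (-q : ℤ) + q = 0)]
      abel
    · rw [hgb (-q) q v, if_pos (by omega : (-q : ℤ) + q = 0), map_add, hbb (n+q) q _]
      abel
  · rw [if_neg hqr, T0, T0]
    split_ifs with h
    · rw [hbb (n+q) r v, hgb (-q) r (β (n+q) v), if_neg (by omega)]
      abel
    · rw [hgb (-q) r v, if_neg (by omega), add_zero, hbb (n+q) r _]
      abel

include hgb hgg in
lemma T0_gamma (n q x : ℤ) (v : M) :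
    T0 β γ n q (γ x v) - γ x (T0 β γ n q v) = if q = -(n + x) then -γ (n + x) v else 0 := by
  by_cases hqx : q = -(n + x)
  · have hq : -q = n + x := by omega
    rw [if_pos hqx, T0, T0]
    split_ifs with h
    · rw [hbg hgb x (n+q) v, if_pos (by omega : x + (n + q) = 0), map_sub, hgg (-q) x _, hq]
      abel
    · rw [hgg (-q) x v, hbg hgb x (n+q) (γ (-q) v), if_pos (by omega : x + (n + q) = 0), hq]
      abel
  · rw [if_neg hqx, T0, T0]
    split_ifs with h
    · rw [hbg hgb x (n+q) v, if_neg (by omega), sub_zero, hgg (-q) x _]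
      abel
    · rw [hgg (-q) x v, hbg hgb x (n+q) (γ (-q) v), if_neg (by omega), sub_zero]
      abel

include hab hag in
lemma T0_a (n q x : ℤ) (v : M) : T0 β γ n q (a x v) = a x (T0 β γ n q v) := by
  rw [T0, T0]
  split_ifs with h
  · rw [← hab x (n+q) v, ← hag x (-q) _]
  · rw [← hag x (-q) v, ← hab x (n+q) _]

variable {κ : ℂ} {J0 : ℤ → Module.End ℂ M}
variable (hJ0' : ∀ (n : ℤ) (v : M), J0 n v = κ • a n v + ∑ᶠ q : ℤ, T0 β γ n q v)

include hloc hgb hbb hab hJ0' in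
lemma commJ0β (n r : ℤ) (v : M) : J0 n (β r v) = β r (J0 n v) + β (n + r) v := by
  have h1 : ∑ᶠ q : ℤ, (T0 β γ n q (β r v) - β r (T0 β γ n q v)) = β (n + r) v := by
    rw [finsum_congr (fun q => T0_beta hgb hbb n q r v)]
    rw [finsum_eq_single _ r (fun x hx => if_neg hx), if_pos rfl]
  have h2 : (∑ᶠ q : ℤ, T0 β γ n q (β r v)) - ∑ᶠ q : ℤ, β r (T0 β γ n q v) = β (n + r) v := by
    rw [← finsum_sub_distrib (finT0 hloc n (β r v)) (fin_comp (β r) (finT0 hloc n v))]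
    exact h1
  rw [hJ0' n (β r v), hJ0' n v, map_add, map_smul,
    endo_finsum (β r) (finT0 hloc n v), hab n r v,
    show (∑ᶠ q : ℤ, T0 β γ n q (β r v))
      = (∑ᶠ q : ℤ, β r (T0 β γ n q v)) + β (n + r) v from by rw [← h2]; abel]
  abel

include hloc hgb hgg hag hJ0' in
lemma commJ0γ (n x : ℤ) (v : M) : J0 n (γ x v) = γ x (J0 n v) - γ (n + x) v := by
  have h1 : ∑ᶠ q : ℤ, (T0 β γ n q (γ x v) - γ x (T0 β γ n q v)) = -γ (n + x) v := by
    rw [finsum_congr (fun q => T0_gamma hgb hgg n q x v)]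
    rw [finsum_eq_single _ (-(n+x)) (fun y hy => if_neg hy), if_pos rfl]
  have h2 : (∑ᶠ q : ℤ, T0 β γ n q (γ x v)) - ∑ᶠ q : ℤ, γ x (T0 β γ n q v) = -γ (n + x) v := by
    rw [← finsum_sub_distrib (finT0 hloc n (γ x v)) (fin_comp (γ x) (finT0 hloc n v))]
    exact h1
  rw [hJ0' n (γ x v), hJ0' n v, map_add, map_smul,
    endo_finsum (γ x) (finT0 hloc n v), hag n x v,
    show (∑ᶠ q : ℤ, T0 β γ n q (γ x v))
      = (∑ᶠ q : ℤ, γ x (T0 β γ n q v)) - γ (n + x) v from by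
        have h3 : (∑ᶠ q : ℤ, T0 β γ n q (γ x v))
            = ((∑ᶠ q : ℤ, T0 β γ n q (γ x v)) - ∑ᶠ q : ℤ, γ x (T0 β γ n q v))
              + ∑ᶠ q : ℤ, γ x (T0 β γ n q v) := by abel
        rw [h3, h2]; abel]
  abel

include hloc hab hag haa' hJ0' in
lemma commJ0a (n x : ℤ) (v : M) :
    J0 n (a x v) = a x (J0 n v) + (if n + x = 0 then (κ * n / 2 : ℂ) else 0) • v := by
  have hsc : (if n + x = 0 then (κ * (n : ℂ) / 2) else 0) • v
      = κ • (if n + x = 0 then ((n : ℂ)/2) else 0) • v := by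
    by_cases hnx : n + x = 0
    · rw [if_pos hnx, if_pos hnx, smul_smul, mul_div_assoc]
    · rw [if_neg hnx, if_neg hnx, zero_smul, smul_zero]
  rw [hJ0' n (a x v), hJ0' n v, map_add, map_smul,
    endo_finsum (a x) (finT0 hloc n v),
    finsum_congr (fun q => T0_a hab hag n q x v), haa' n x v, hsc, smul_add]
  abel

lemma fin_add {ι : Type*} {f g : ι → M} (hf : (support f).Finite) (hg : (support g).Finite) :
    (support fun i => f i + g i).Finite :=
  (hf.union hg).subset (fun i hi => by
    simp only [mem_support, Set.mem_union] at hi ⊢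
    by_contra hc
    push_neg at hc
    exact hi (by rw [hc.1, hc.2, add_zero]))

lemma fin_shift {f : ℤ → M} (hf : (support f).Finite) (t : ℤ) :
    (support fun q => f (q - t)).Finite := by
  have := hf.preimage (f := fun q : ℤ => q - t)
    (Set.injOn_of_injective (fun x y h => by omega))
  exact this.subset (fun q hq => by simpa using hq)

include hloc hgb hgg hbb hab hag hJ0' in
lemma T0_J0 (n m q : ℤ) (v : M) :
    J0 n (T0 β γ m q v) - T0 β γ m q (J0 n v)
      = ((if 0 ≤ m + q then (1:ℤ) else 0) - (if 0 ≤ n + m + q then 1 else 0))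
          • (if n + m = 0 then v else 0)
        + T0 β γ (n + m) q v - T0 β γ (n + m) (q - n) v := by
  have hδ : (if -q + (n + m + q) = 0 then v else 0) = (if n + m = 0 then v else 0) := by
    by_cases hnm : n + m = 0
    · rw [if_pos (by omega), if_pos hnm]
    · rw [if_neg (by omega), if_neg hnm]
  have e2 : T0 β γ (n + m) (q - n) v
      = if 0 ≤ m + q then γ (n + -q) (β (m + q) v) else β (m + q) (γ (n + -q) v) := by
    rw [T0, show n + m + (q - n) = m + q from by ring, show -(q - n) = n + -q from by ring]
  rw [e2, T0, T0]
  by_cases h : 0 ≤ m + q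
  · simp only [if_pos h]
    rw [commJ0γ hloc hgb hgg hag hJ0' n (-q) (β (m + q) v),
      commJ0β hloc hgb hbb hab hJ0' n (m + q) v, map_add,
      show n + (m + q) = n + m + q from by ring]
    rw [T0]
    by_cases h2 : 0 ≤ n + m + q
    · simp only [if_pos h2]
      rw [sub_self, zero_smul]
      abel
    · simp only [if_neg h2]
      rw [hgb (-q) (n + m + q) v, hδ, sub_zero, one_smul]
      abel
  · simp only [if_neg h]
    rw [commJ0β hloc hgb hbb hab hJ0' n (m + q) (γ (-q) v),
      commJ0γ hloc hgb hgg hag hJ0' n (-q) v, map_sub,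
      show n + (m + q) = n + m + q from by ring]
    rw [T0]
    by_cases h2 : 0 ≤ n + m + q
    · simp only [if_pos h2]
      rw [hbg hgb (-q) (n + m + q) v, hδ, zero_sub, neg_one_zsmul]
      abel
    · simp only [if_neg h2]
      rw [sub_self, zero_smul]
      abel

include hloc hgb hgg hbb hab hag haa' hJ0' in
lemma rel00pt (n m : ℤ) (v : M) :
    J0 n (J0 m v) - J0 m (J0 n v)
      = (if n + m = 0 then ((n : ℂ) * κ ^ 2 / 2 - n) else 0) • v := by
  set δv := if n + m = 0 then v else 0 with hδv
  set c : ℤ → ℤ := fun q => (if 0 ≤ m + q then (1:ℤ) else 0) - (if 0 ≤ n + m + q then 1 else 0)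
    with hcdef
  have hfinc : (support c).Finite := by
    apply finZ (min (-m) (-n - m)) (max (-m) (-n - m))
    intro q hq
    constructor
    · by_contra hcon; push_neg at hcon
      exact hq (by simp only [hcdef]; rw [if_neg (by omega), if_neg (by omega), sub_self])
    · by_contra hcon; push_neg at hcon
      exact hq (by simp only [hcdef]; rw [if_pos (by omega), if_pos (by omega), sub_self])
  have hfin_cs : (support fun q => c q • δv).Finite :=
    hfinc.subset (fun q hq => by
      simp only [mem_support] at hq ⊢
      exact fun h0 => hq (by rw [h0, zero_smul]))
  have hsum_c : (∑ᶠ q : ℤ, c q) = -n := by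
    have hneg : (∑ᶠ q : ℤ, c q) = ∑ᶠ q : ℤ, c (-q) := (finsum_neg2 c).symm
    have hcd : ∀ q : ℤ, c (-q) = (fun x => if 0 ≤ m - x then (1:ℤ) else 0) q
        - (fun x => if 0 ≤ m - x then (1:ℤ) else 0) (q - n) := by
      intro q
      have a1 : (if 0 ≤ m + -q then (1:ℤ) else 0) = (if 0 ≤ m - q then (1:ℤ) else 0) := by
        by_cases h1 : 0 ≤ m - q
        · rw [if_pos (by omega), if_pos h1]
        · rw [if_neg (by omega), if_neg h1]
      have a2 : (if 0 ≤ n + m + -q then (1:ℤ) else 0)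
          = (if 0 ≤ m - (q - n) then (1:ℤ) else 0) := by
        by_cases h1 : 0 ≤ m - (q - n)
        · rw [if_pos (by omega), if_pos h1]
        · rw [if_neg (by omega), if_neg h1]
      simp only [hcdef]
      rw [a1, a2]
    rw [hneg, finsum_congr hcd,
      tele (fun x => if 0 ≤ m - x then (1:ℤ) else 0) 1 m (m + 1)
        (fun p hp => if_pos (by omega)) (fun p hp => if_neg (by omega)) n]
    simp
  have hδsum : (∑ᶠ q : ℤ, c q • δv) = (-n : ℤ) • δv := by
    have := (zmultiplesHom M δv).map_finsum hfinc
    rw [hsum_c] at this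
    exact this.symm
  have e1 : J0 n (J0 m v) = κ • J0 n (a m v) + ∑ᶠ q : ℤ, J0 n (T0 β γ m q v) := by
    rw [hJ0' m v, map_add, map_smul, endo_finsum (J0 n) (finT0 hloc m v)]
  have e4 : (∑ᶠ q : ℤ, (J0 n (T0 β γ m q v) - T0 β γ m q (J0 n v))) = (-n : ℤ) • δv := by
    rw [finsum_congr (fun q => T0_J0 hloc hgb hgg hbb hab hag hJ0' n m q v)]
    rw [finsum_sub_distrib (fin_add hfin_cs (finT0 hloc (n + m) v))
        (fin_shift (finT0 hloc (n + m) v) n),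
      finsum_add_distrib hfin_cs (finT0 hloc (n + m) v), hδsum]
    have hshift : (∑ᶠ q : ℤ, T0 β γ (n + m) (q - n) v) = ∑ᶠ q : ℤ, T0 β γ (n + m) q v := by
      rw [finsum_congr (fun q => by rw [sub_eq_add_neg] :
        ∀ q : ℤ, T0 β γ (n + m) (q - n) v = T0 β γ (n + m) (q + -n) v)]
      exact finsum_shift (fun q => T0 β γ (n + m) q v) (-n)
    rw [hshift]
    abel
  have e5 : (∑ᶠ q : ℤ, J0 n (T0 β γ m q v)) - ∑ᶠ q : ℤ, T0 β γ m q (J0 n v)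
      = (-n : ℤ) • δv := by
    rw [← finsum_sub_distrib (fin_comp (J0 n) (finT0 hloc m v)) (finT0 hloc m (J0 n v))]
    exact e4
  rw [e1, hJ0' m (J0 n v), commJ0a hloc hab hag haa' hJ0' n m v]
  have hfinal : κ • (a m (J0 n v) + (if n + m = 0 then (κ * (n:ℂ) / 2) else 0) • v)
      + ∑ᶠ q : ℤ, J0 n (T0 β γ m q v)
      - (κ • a m (J0 n v) + ∑ᶠ q : ℤ, T0 β γ m q (J0 n v))
      = κ • (if n + m = 0 then (κ * (n:ℂ) / 2) else 0) • v + (-n : ℤ) • δv := by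
    rw [smul_add]
    rw [show κ • a m (J0 n v) + κ • (if n + m = 0 then (κ * (n:ℂ) / 2) else 0) • v
        + ∑ᶠ q : ℤ, J0 n (T0 β γ m q v)
        - (κ • a m (J0 n v) + ∑ᶠ q : ℤ, T0 β γ m q (J0 n v))
        = κ • (if n + m = 0 then (κ * (n:ℂ) / 2) else 0) • v
          + ((∑ᶠ q : ℤ, J0 n (T0 β γ m q v)) - ∑ᶠ q : ℤ, T0 β γ m q (J0 n v)) from by abel,
      e5]
  rw [hfinal]
  by_cases hnm : n + m = 0
  · simp only [hδv, if_pos hnm]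
    rw [← Int.cast_smul_eq_zsmul ℂ (-n) v]
    match_scalars
    push_cast
    ring
  · simp only [hδv, if_neg hnm]
    simp


lemma fin_negcomp {f : ℤ → M} (hf : (support f).Finite) :
    (support fun q => f (-q)).Finite := by
  have := hf.preimage (f := fun q : ℤ => -q)
    (Set.injOn_of_injective (fun x y h => by omega))
  exact this.subset (fun q hq => by simpa using hq)

lemma fin_shift2snd' {F : ℤ × ℤ → M} (hF : (support F).Finite) (t : ℤ) :
    (support fun pq : ℤ × ℤ => F (pq.1, pq.2 + t)).Finite := by
  have := hF.preimage (f := fun pq : ℤ × ℤ => (pq.1, pq.2 + t))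
    (Set.injOn_of_injective (fun x y h => by
      obtain ⟨h1, h2⟩ := Prod.mk.injEq .. ▸ h
      exact Prod.ext (by simpa using h1) (by omega)))
  exact this.subset (fun pq hpq => by simpa using hpq)

lemma fin_shift2fst' {F : ℤ × ℤ → M} (hF : (support F).Finite) (t : ℤ) :
    (support fun pq : ℤ × ℤ => F (pq.1 + t, pq.2)).Finite := by
  have := hF.preimage (f := fun pq : ℤ × ℤ => (pq.1 + t, pq.2))
    (Set.injOn_of_injective (fun x y h => by
      obtain ⟨h1, h2⟩ := Prod.mk.injEq .. ▸ h
      exact Prod.ext (by omega) (by simpa using h2)))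
  exact this.subset (fun pq hpq => by simpa using hpq)

include hloc hgg hag hab haa' hgb hbb hJ0' in
lemma Tg_J0 (n m q : ℤ) (v : M) :
    J0 n (Tg a γ m q v) - Tg a γ m q (J0 n v)
      = -Tg a γ (n + m) q v + (if q = -n then (κ * (n : ℂ) / 2) • γ (n + m) v else 0) := by
  have hsc : (if n + q = 0 then (κ * (n : ℂ) / 2) else 0) • γ (m - q) v
      = (if q = -n then (κ * (n : ℂ) / 2) • γ (n + m) v else 0) := by
    by_cases hq : q = -n
    · subst hq
      rw [if_pos (by omega), if_pos rfl, show m - -n = n + m from by ring]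
    · rw [if_neg (by omega), if_neg hq, zero_smul]
  rw [Tg, Tg, Tg]
  by_cases h : 1 ≤ q
  · simp only [if_pos h]
    rw [commJ0γ hloc hgb hgg hag hJ0' n (m - q) (a q v),
      commJ0a hloc hab hag haa' hJ0' n q v, map_add, map_smul, hsc,
      show n + (m - q) = n + m - q from by ring]
    abel
  · simp only [if_neg h]
    rw [commJ0a hloc hab hag haa' hJ0' n q (γ (m - q) v),
      commJ0γ hloc hgb hgg hag hJ0' n (m - q) v, map_sub, hsc,
      show n + (m - q) = n + m - q from by ring]
    abel

include hloc hgg hag hab haa' hgb hbb hJ0' in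
lemma commJ0G (n m : ℤ) (v : M) :
    J0 n (∑ᶠ q : ℤ, Tg a γ m q v) - (∑ᶠ q : ℤ, Tg a γ m q (J0 n v))
      = -(∑ᶠ q : ℤ, Tg a γ (n + m) q v) + (κ * (n : ℂ) / 2) • γ (n + m) v := by
  rw [endo_finsum (J0 n) (finTg hloc m v),
    ← finsum_sub_distrib (fin_comp (J0 n) (finTg hloc m v)) (finTg hloc m (J0 n v)),
    finsum_congr (fun q => Tg_J0 hloc hgb hgg hbb hab hag haa' hJ0' n m q v),
    finsum_add_distrib
      ((finTg hloc (n + m) v).subset (fun q hq => by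
        simp only [mem_support] at hq ⊢
        exact fun h0 => hq (by rw [h0, neg_zero])))
      (finZ (M := M) (-n) (-n) (fun q hq => by
        by_contra hc
        exact hq (if_neg (by omega)))),
    finsum_neg_distrib,
    finsum_eq_single _ (-n) (fun q hq => if_neg hq), if_pos rfl]

include hloc hgb hgg hbb hab hag hJ0' in
lemma Tc_J0 (n m p q : ℤ) (v : M) :
    J0 n (Tc β γ m (p, q) v) - Tc β γ m (p, q) (J0 n v)
      = ((if p = n + m then
            ((if 0 ≤ -n - q then (1:ℤ) else 0) - (if 0 ≤ -q then 1 else 0)) • γ (n + m) v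
          else 0)
        + (if q = n + m then
            ((if 0 ≤ -n - p then (1:ℤ) else 0) - (if 0 ≤ -p then 1 else 0)) • γ (n + m) v
          else 0))
        + Tc β γ (n + m) (p, q) v - Tc β γ (n + m) (p, q + n) v
        - Tc β γ (n + m) (p + n, q) v := by
  have key : γ p (γ q (β (n + m - p - q) v)) = β (n + m - p - q) (γ p (γ q v))
      + (if p = n + m then γ (n + m) v else 0) + (if q = n + m then γ (n + m) v else 0) := by
    have c1 : (γ p) (if q + (n + m - p - q) = 0 then v else 0)
        = (if p = n + m then γ (n + m) v else 0) := by
      by_cases hp : p = n + m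
      · rw [if_pos (by omega), if_pos hp, hp]
      · rw [if_neg (by omega), map_zero, if_neg hp]
    have c2 : (if p + (n + m - p - q) = 0 then γ q v else 0)
        = (if q = n + m then γ (n + m) v else 0) := by
      by_cases hq : q = n + m
      · rw [if_pos (by omega), if_pos hq, hq]
      · rw [if_neg (by omega), if_neg hq]
    rw [hgb q (n + m - p - q) v, map_add, hgb p (n + m - p - q) (γ q v), c1, c2]
    abel
  have key2 : β (n + m - p - q) (γ p (γ q v)) = γ p (γ q (β (n + m - p - q) v))
      - (if p = n + m then γ (n + m) v else 0) - (if q = n + m then γ (n + m) v else 0) := by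
    rw [key]; abel
  have eA : Tc β γ (n + m) (p, q + n) v
      = if 0 ≤ m - p - q then γ p (γ (q + n) (β (m - p - q) v))
        else β (m - p - q) (γ p (γ (q + n) v)) := by
    rw [Tc, show n + m - p - (q + n) = m - p - q from by ring]
  have eB : Tc β γ (n + m) (p + n, q) v
      = if 0 ≤ m - p - q then γ (p + n) (γ q (β (m - p - q) v))
        else β (m - p - q) (γ (p + n) (γ q v)) := by
    rw [Tc, show n + m - (p + n) - q = m - p - q from by ring]
  rw [eA, eB, Tc, Tc]
  simp only
  by_cases h : 0 ≤ m - p - q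
  · simp only [if_pos h]
    rw [commJ0γ hloc hgb hgg hag hJ0' n p (γ q (β (m - p - q) v)),
      commJ0γ hloc hgb hgg hag hJ0' n q (β (m - p - q) v),
      commJ0β hloc hgb hbb hab hJ0' n (m - p - q) v, map_add, map_sub, map_add,
      show n + q = q + n from by ring, show n + p = p + n from by ring,
      show n + (m - p - q) = n + m - p - q from by ring, Tc]
    simp only
    by_cases h2 : 0 ≤ n + m - p - q
    · simp only [if_pos h2]
      have he1 : (if p = n + m then
            ((if 0 ≤ -n - q then (1:ℤ) else 0) - (if 0 ≤ -q then 1 else 0)) • γ (n + m) v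
          else 0) = 0 := by
        by_cases hp : p = n + m
        · rw [if_pos hp, if_pos (by omega), if_pos (by omega), sub_self, zero_smul]
        · rw [if_neg hp]
      have he2 : (if q = n + m then
            ((if 0 ≤ -n - p then (1:ℤ) else 0) - (if 0 ≤ -p then 1 else 0)) • γ (n + m) v
          else 0) = 0 := by
        by_cases hq : q = n + m
        · rw [if_pos hq, if_pos (by omega), if_pos (by omega), sub_self, zero_smul]
        · rw [if_neg hq]
      rw [he1, he2]
      abel
    · simp only [if_neg h2]
      have he1 : (if p = n + m then
            ((if 0 ≤ -n - q then (1:ℤ) else 0) - (if 0 ≤ -q then 1 else 0)) • γ (n + m) v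
          else 0) = (if p = n + m then γ (n + m) v else 0) := by
        by_cases hp : p = n + m
        · rw [if_pos hp, if_pos hp, if_pos (by omega), if_neg (by omega), sub_zero, one_smul]
        · rw [if_neg hp, if_neg hp]
      have he2 : (if q = n + m then
            ((if 0 ≤ -n - p then (1:ℤ) else 0) - (if 0 ≤ -p then 1 else 0)) • γ (n + m) v
          else 0) = (if q = n + m then γ (n + m) v else 0) := by
        by_cases hq : q = n + m
        · rw [if_pos hq, if_pos hq, if_pos (by omega), if_neg (by omega), sub_zero, one_smul]
        · rw [if_neg hq, if_neg hq]
      rw [he1, he2, key]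
      abel
  · simp only [if_neg h]
    rw [commJ0β hloc hgb hbb hab hJ0' n (m - p - q) (γ p (γ q v)),
      commJ0γ hloc hgb hgg hag hJ0' n p (γ q v),
      commJ0γ hloc hgb hgg hag hJ0' n q v, map_sub, map_sub, map_sub,
      show n + q = q + n from by ring, show n + p = p + n from by ring,
      show n + (m - p - q) = n + m - p - q from by ring, Tc]
    simp only
    by_cases h2 : 0 ≤ n + m - p - q
    · simp only [if_pos h2]
      have he1 : (if p = n + m then
            ((if 0 ≤ -n - q then (1:ℤ) else 0) - (if 0 ≤ -q then 1 else 0)) • γ (n + m) v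
          else 0) = -(if p = n + m then γ (n + m) v else 0) := by
        by_cases hp : p = n + m
        · rw [if_pos hp, if_pos hp, if_neg (by omega), if_pos (by omega), zero_sub,
            neg_smul, one_smul]
        · rw [if_neg hp, if_neg hp, neg_zero]
      have he2 : (if q = n + m then
            ((if 0 ≤ -n - p then (1:ℤ) else 0) - (if 0 ≤ -p then 1 else 0)) • γ (n + m) v
          else 0) = -(if q = n + m then γ (n + m) v else 0) := by
        by_cases hq : q = n + m
        · rw [if_pos hq, if_pos hq, if_neg (by omega), if_pos (by omega), zero_sub,
            neg_smul, one_smul]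
        · rw [if_neg hq, if_neg hq, neg_zero]
      rw [he1, he2, key2]
      abel
    · simp only [if_neg h2]
      have he1 : (if p = n + m then
            ((if 0 ≤ -n - q then (1:ℤ) else 0) - (if 0 ≤ -q then 1 else 0)) • γ (n + m) v
          else 0) = 0 := by
        by_cases hp : p = n + m
        · rw [if_pos hp, if_neg (by omega), if_neg (by omega), sub_self, zero_smul]
        · rw [if_neg hp]
      have he2 : (if q = n + m then
            ((if 0 ≤ -n - p then (1:ℤ) else 0) - (if 0 ≤ -p then 1 else 0)) • γ (n + m) v
          else 0) = 0 := by
        by_cases hq : q = n + m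
        · rw [if_pos hq, if_neg (by omega), if_neg (by omega), sub_self, zero_smul]
        · rw [if_neg hq]
      rw [he1, he2]
      abel

lemma fin_sub {ι : Type*} {f g : ι → M} (hf : (support f).Finite) (hg : (support g).Finite) :
    (support fun i => f i - g i).Finite :=
  (hf.union hg).subset (fun i hi => by
    simp only [mem_support, Set.mem_union] at hi ⊢
    by_contra hc
    push_neg at hc
    exact hi (by rw [hc.1, hc.2, sub_zero]))

set_option maxHeartbeats 1000000 in
include hloc hgb hgg hbb hab hag hJ0' in
lemma commJ0C (n m : ℤ) (v : M) :
    J0 n (∑ᶠ pq : ℤ × ℤ, Tc β γ m pq v) - (∑ᶠ pq : ℤ × ℤ, Tc β γ m pq (J0 n v))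
      = -(∑ᶠ pq : ℤ × ℤ, Tc β γ (n + m) pq v) - (2 * n : ℤ) • γ (n + m) v := by
  set c2 : ℤ → ℤ := fun x => (if 0 ≤ -n - x then (1:ℤ) else 0) - (if 0 ≤ -x then 1 else 0)
    with hc2def
  have hc2zero : ∀ x : ℤ, (x ≤ min (-n) 0 ∨ max (-n) 0 < x) → c2 x = 0 := by
    intro x hx
    rcases hx with hx | hx
    · simp only [hc2def]; rw [if_pos (by omega), if_pos (by omega), sub_self]
    · simp only [hc2def]; rw [if_neg (by omega), if_neg (by omega), sub_self]
  have hc2fin : (support c2).Finite := by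
    apply finZ (min (-n) 0 + 1) (max (-n) 0)
    intro x hx
    constructor <;> by_contra hc <;> push_neg at hc
    · exact hx (hc2zero x (Or.inl (by omega)))
    · exact hx (hc2zero x (Or.inr (by omega)))
  have hsumc2 : (∑ᶠ x : ℤ, c2 x) = -n := by
    have hc2e : ∀ x : ℤ, c2 x = (fun y => if 0 ≤ -n - y then (1:ℤ) else 0) x
        - (fun y => if 0 ≤ -n - y then (1:ℤ) else 0) (x - n) := by
      intro x
      have h1 : (if 0 ≤ -x then (1:ℤ) else 0) = (if 0 ≤ -n - (x - n) then (1:ℤ) else 0) := by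
        by_cases hx : 0 ≤ -x
        · rw [if_pos hx, if_pos (by omega)]
        · rw [if_neg hx, if_neg (by omega)]
      simp only [hc2def]
      rw [h1]
    rw [finsum_congr hc2e, tele _ 1 (-n) (-n + 1)
      (fun p hp => if_pos (by omega)) (fun p hp => if_neg (by omega)) n]
    simp
  have hhfin : (support fun q => c2 q • γ (n + m) v).Finite :=
    hc2fin.subset (fun q hq => by
      simp only [mem_support] at hq ⊢
      exact fun h0 => hq (by rw [h0, zero_smul]))
  have hE1fin : (support fun pq : ℤ × ℤ =>
      if pq.1 = n + m then c2 pq.2 • γ (n + m) v else 0).Finite := by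
    apply finZ2 (min (min (-n) 0 + 1) (n + m)) (max (max (-n) 0) (n + m))
    intro p q hpq
    have hp : p = n + m := by
      by_contra hp; exact hpq (if_neg hp)
    have hq : c2 q ≠ 0 := by
      intro h0
      exact hpq (by subst hp; rw [if_pos rfl, h0, zero_smul])
    have hq1 : ¬(q ≤ min (-n) 0 ∨ max (-n) 0 < q) := fun hcc => hq (hc2zero q hcc)
    push_neg at hq1
    omega
  have hE2fin : (support fun pq : ℤ × ℤ =>
      if pq.2 = n + m then c2 pq.1 • γ (n + m) v else 0).Finite := by
    apply finZ2 (min (min (-n) 0 + 1) (n + m)) (max (max (-n) 0) (n + m))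
    intro p q hpq
    have hp : q = n + m := by
      by_contra hp; exact hpq (if_neg hp)
    have hq : c2 p ≠ 0 := by
      intro h0
      exact hpq (by subst hp; rw [if_pos rfl, h0, zero_smul])
    have hq1 : ¬(p ≤ min (-n) 0 ∨ max (-n) 0 < p) := fun hcc => hq (hc2zero p hcc)
    push_neg at hq1
    omega
  have hE1sum : (∑ᶠ pq : ℤ × ℤ, if pq.1 = n + m then c2 pq.2 • γ (n + m) v else 0)
      = (-n : ℤ) • γ (n + m) v := by
    rw [finsum_line_fst (fun q => c2 q • γ (n + m) v) (n + m) hhfin]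
    have := (zmultiplesHom M (γ (n + m) v)).map_finsum hc2fin
    rw [hsumc2] at this
    exact this.symm
  have hE2sum : (∑ᶠ pq : ℤ × ℤ, if pq.2 = n + m then c2 pq.1 • γ (n + m) v else 0)
      = (-n : ℤ) • γ (n + m) v := by
    rw [finsum_line_snd (fun q => c2 q • γ (n + m) v) (n + m) hhfin]
    have := (zmultiplesHom M (γ (n + m) v)).map_finsum hc2fin
    rw [hsumc2] at this
    exact this.symm
  have hTcS := finTc (a := a) hloc hgb hgg (n + m) v
  have hfA : (support fun pq : ℤ × ℤ => Tc β γ (n + m) (pq.1, pq.2 + n) v).Finite :=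
    fin_shift2snd' (F := fun pq => Tc β γ (n + m) pq v) hTcS n
  have hfB : (support fun pq : ℤ × ℤ => Tc β γ (n + m) (pq.1 + n, pq.2) v).Finite :=
    fin_shift2fst' (F := fun pq => Tc β γ (n + m) pq v) hTcS n
  have hf3 : (support fun pq : ℤ × ℤ =>
      (if pq.1 = n + m then c2 pq.2 • γ (n + m) v else 0)
      + (if pq.2 = n + m then c2 pq.1 • γ (n + m) v else 0)).Finite :=
    fin_add hE1fin hE2fin
  have hf2 : (support fun pq : ℤ × ℤ =>
      ((if pq.1 = n + m then c2 pq.2 • γ (n + m) v else 0)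
      + (if pq.2 = n + m then c2 pq.1 • γ (n + m) v else 0)) + Tc β γ (n + m) pq v).Finite :=
    fin_add hf3 hTcS
  have hf1 : (support fun pq : ℤ × ℤ =>
      (((if pq.1 = n + m then c2 pq.2 • γ (n + m) v else 0)
      + (if pq.2 = n + m then c2 pq.1 • γ (n + m) v else 0)) + Tc β γ (n + m) pq v)
      - Tc β γ (n + m) (pq.1, pq.2 + n) v).Finite :=
    fin_sub hf2 hfA
  rw [endo_finsum (J0 n) (finTc hloc hgb hgg m v),
    ← finsum_sub_distrib (fin_comp (J0 n) (finTc hloc hgb hgg m v))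
      (finTc hloc hgb hgg m (J0 n v)),
    show (∑ᶠ pq : ℤ × ℤ, (J0 n (Tc β γ m pq v) - Tc β γ m pq (J0 n v)))
      = ∑ᶠ pq : ℤ × ℤ,
        ((((if pq.1 = n + m then c2 pq.2 • γ (n + m) v else 0)
          + (if pq.2 = n + m then c2 pq.1 • γ (n + m) v else 0))
          + Tc β γ (n + m) pq v - Tc β γ (n + m) (pq.1, pq.2 + n) v)
          - Tc β γ (n + m) (pq.1 + n, pq.2) v)
      from finsum_congr (fun pq => Tc_J0 hloc hgb hgg hbb hab hag hJ0' n m pq.1 pq.2 v),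
    finsum_sub_distrib hf1 hfB, finsum_sub_distrib hf2 hfA,
    finsum_add_distrib hf3 hTcS, finsum_add_distrib hE1fin hE2fin,
    hE1sum, hE2sum,
    finsum_shift2snd (fun pq => Tc β γ (n + m) pq v) n,
    finsum_shift2fst (fun pq => Tc β γ (n + m) pq v) n,
    show (-n : ℤ) • γ (n + m) v + (-n : ℤ) • γ (n + m) v = -((2 * n : ℤ) • γ (n + m) v)
      from by rw [← add_smul, ← neg_smul]; congr 1; ring]
  abel

variable {Jm : ℤ → Module.End ℂ M} {k : ℂ}
variable (hJm' : ∀ (m : ℤ) (v : M), Jm m v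
  = -(∑ᶠ pq : ℤ × ℤ, Tc β γ m pq v) - (2 * κ) • (∑ᶠ q : ℤ, Tg a γ m q v) + (k * m) • γ m v)

set_option maxHeartbeats 1000000 in
include hloc hgb hgg hbb hab hag haa' hJ0' hJm' in
lemma rel0mpt (hk : k = κ ^ 2 - 2) (n m : ℤ) (v : M) :
    J0 n (Jm m v) - Jm m (J0 n v) = -(Jm (n + m) v) := by
  rw [hJm' m v, hJm' m (J0 n v), hJm' (n + m) v, map_add, map_sub, map_neg, map_smul,
    map_smul]
  have hC' : J0 n (∑ᶠ pq : ℤ × ℤ, Tc β γ m pq v)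
      = (-(∑ᶠ pq : ℤ × ℤ, Tc β γ (n + m) pq v) - (2 * n : ℤ) • γ (n + m) v)
        + ∑ᶠ pq : ℤ × ℤ, Tc β γ m pq (J0 n v) :=
    sub_eq_iff_eq_add.mp (commJ0C hloc hgb hgg hbb hab hag hJ0' n m v)
  have hG' : J0 n (∑ᶠ q : ℤ, Tg a γ m q v)
      = (-(∑ᶠ q : ℤ, Tg a γ (n + m) q v) + (κ * (n : ℂ) / 2) • γ (n + m) v)
        + ∑ᶠ q : ℤ, Tg a γ m q (J0 n v) :=
    sub_eq_iff_eq_add.mp (commJ0G hloc hgb hgg hbb hab hag haa' hJ0' n m v)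
  rw [hC', hG', commJ0γ hloc hgb hgg hag hJ0' n m v]
  rw [← Int.cast_smul_eq_zsmul ℂ (2 * n) (γ (n + m) v)]
  subst hk
  match_scalars <;> (push_cast; ring)

lemma fin_neg {ι : Type*} {f : ι → M} (hf : (support f).Finite) :
    (support fun i => -(f i)).Finite :=
  hf.subset (fun i hi => by
    simp only [mem_support, neg_eq_zero] at hi
    simpa [mem_support] using hi)

lemma fin_line_fst {h : ℤ → M} (c : ℤ) (hh : (support h).Finite) :
    (support fun pq : ℤ × ℤ => if pq.1 = c then h pq.2 else 0).Finite := by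
  apply Set.Finite.subset ((Set.finite_singleton c).prod hh)
  rintro ⟨p, q⟩ hpq
  simp only [mem_support] at hpq
  have hp : p = c := by by_contra hp; exact hpq (if_neg hp)
  subst hp
  simp only [Set.mem_prod, Set.mem_singleton_iff, mem_support]
  exact ⟨trivial, fun h0 => hpq (by rw [if_pos rfl, h0])⟩

lemma fin_line_snd {h : ℤ → M} (c : ℤ) (hh : (support h).Finite) :
    (support fun pq : ℤ × ℤ => if pq.2 = c then h pq.1 else 0).Finite := by
  apply Set.Finite.subset (hh.prod (Set.finite_singleton c))
  rintro ⟨p, q⟩ hpq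
  simp only [mem_support] at hpq
  have hp : q = c := by by_contra hp; exact hpq (if_neg hp)
  subst hp
  simp only [Set.mem_prod, Set.mem_singleton_iff, mem_support]
  exact ⟨fun h0 => hpq (by rw [if_pos rfl, h0]), trivial⟩

include hgb hab in
lemma Tg_beta (x m q : ℤ) (v : M) :
    β x (Tg a γ m q v) - Tg a γ m q (β x v) = (if q = x + m then -(a (x + m) v) else 0) := by
  by_cases hq : q = x + m
  · subst hq
    rw [if_pos rfl, Tg, Tg]
    split_ifs with h
    · rw [hbg hgb (m - (x + m)) x (a (x + m) v), ← hab (x + m) x v,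
        if_pos (by omega : (m - (x + m)) + x = 0)]
      abel
    · rw [← hab (x + m) x (γ (m - (x + m)) v), hbg hgb (m - (x + m)) x v,
        if_pos (by omega : (m - (x + m)) + x = 0), map_sub]
      abel
  · rw [if_neg hq, Tg, Tg]
    split_ifs with h
    · rw [hbg hgb (m - q) x (a q v), ← hab q x v, if_neg (by omega), sub_zero]
      abel
    · rw [← hab q x (γ (m - q) v), hbg hgb (m - q) x v, if_neg (by omega), sub_zero]
      abel

include hloc hgb hab in
lemma commβG (x m : ℤ) (v : M) :
    β x (∑ᶠ q : ℤ, Tg a γ m q v) - ∑ᶠ q : ℤ, Tg a γ m q (β x v) = -(a (x + m) v) := by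
  rw [endo_finsum (β x) (finTg hloc m v),
    ← finsum_sub_distrib (fin_comp (β x) (finTg hloc m v)) (finTg hloc m (β x v)),
    finsum_congr (fun q => Tg_beta hgb hab x m q v),
    finsum_eq_single _ (x + m) (fun q hq => if_neg hq), if_pos rfl]

include hgb hgg hbb in
lemma Tc_beta (x m p q : ℤ) (v : M) :
    β x (Tc β γ m (p, q) v) - Tc β γ m (p, q) (β x v)
      = -(if p = -x then (if 0 ≤ x + m - q then γ q (β (x + m - q) v)
            else β (x + m - q) (γ q v)) else 0)
        - (if q = -x then (if 0 ≤ x + m - p then γ p (β (x + m - p) v)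
            else β (x + m - p) (γ p v)) else 0) := by
  rw [Tc, Tc]
  simp only
  by_cases h : 0 ≤ m - p - q
  · simp only [if_pos h]
    have hd1 : (if p + x = 0 then γ q (β (m - p - q) v) else 0)
        = (if p = -x then (if 0 ≤ x + m - q then γ q (β (x + m - q) v)
            else β (x + m - q) (γ q v)) else 0) := by
      by_cases hp : p = -x
      · rw [if_pos (by omega), if_pos hp, if_pos (by omega),
          show m - p - q = x + m - q from by omega]
      · rw [if_neg (by omega), if_neg hp]
    have hd2 : (γ p) (if q + x = 0 then β (m - p - q) v else 0)
        = (if q = -x then (if 0 ≤ x + m - p then γ p (β (x + m - p) v)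
            else β (x + m - p) (γ p v)) else 0) := by
      by_cases hq : q = -x
      · rw [if_pos (by omega), if_pos hq, if_pos (by omega),
          show m - p - q = x + m - p from by omega]
      · rw [if_neg (by omega), map_zero, if_neg hq]
    rw [hbg hgb p x (γ q (β (m - p - q) v)), hbg hgb q x (β (m - p - q) v),
      map_sub, hbb x (m - p - q) v, hd1, hd2]
    abel
  · simp only [if_neg h]
    have hd1 : (β (m - p - q)) (if p + x = 0 then γ q v else 0)
        = (if p = -x then (if 0 ≤ x + m - q then γ q (β (x + m - q) v)
            else β (x + m - q) (γ q v)) else 0) := by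
      by_cases hp : p = -x
      · rw [if_pos (by omega), if_pos hp, if_neg (by omega),
          show m - p - q = x + m - q from by omega]
      · rw [if_neg (by omega), map_zero, if_neg hp]
    have hd2 : (β (m - p - q)) ((γ p) (if q + x = 0 then v else 0))
        = (if q = -x then (if 0 ≤ x + m - p then γ p (β (x + m - p) v)
            else β (x + m - p) (γ p v)) else 0) := by
      by_cases hq : q = -x
      · rw [if_pos (by omega), if_pos hq, if_neg (by omega),
          show m - p - q = x + m - p from by omega]
      · rw [if_neg (by omega), map_zero, map_zero, if_neg hq]
    rw [hbb x (m - p - q) (γ p (γ q v)), hbg hgb p x (γ q v), hbg hgb q x v,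
      map_sub, map_sub, map_sub, hd1, hd2]
    abel

set_option maxHeartbeats 1000000 in
include hloc hgb hgg hbb in
lemma commβC (x m : ℤ) (v : M) :
    β x (∑ᶠ pq : ℤ × ℤ, Tc β γ m pq v) - ∑ᶠ pq : ℤ × ℤ, Tc β γ m pq (β x v)
      = -(∑ᶠ q : ℤ, T0 β γ (x + m) q v) - ∑ᶠ q : ℤ, T0 β γ (x + m) q v := by
  have hT0e : (fun y : ℤ => if 0 ≤ x + m - y then γ y (β (x + m - y) v)
      else β (x + m - y) (γ y v)) = fun y => T0 β γ (x + m) (-y) v := by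
    funext y
    rw [T0, show x + m + -y = x + m - y from by ring, neg_neg]
  have hhfin : (support fun y : ℤ => if 0 ≤ x + m - y then γ y (β (x + m - y) v)
      else β (x + m - y) (γ y v)).Finite := by
    rw [hT0e]; exact fin_negcomp (finT0 hloc (x + m) v)
  have hline1 := fin_line_fst (h := fun y : ℤ => if 0 ≤ x + m - y then γ y (β (x + m - y) v)
      else β (x + m - y) (γ y v)) (-x) hhfin
  have hline2 := fin_line_snd (h := fun y : ℤ => if 0 ≤ x + m - y then γ y (β (x + m - y) v)
      else β (x + m - y) (γ y v)) (-x) hhfin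
  rw [endo_finsum (β x) (finTc hloc hgb hgg m v),
    ← finsum_sub_distrib (fin_comp (β x) (finTc hloc hgb hgg m v))
      (finTc hloc hgb hgg m (β x v)),
    show (∑ᶠ pq : ℤ × ℤ, (β x (Tc β γ m pq v) - Tc β γ m pq (β x v)))
      = ∑ᶠ pq : ℤ × ℤ,
        (-(if pq.1 = -x then (if 0 ≤ x + m - pq.2 then γ pq.2 (β (x + m - pq.2) v)
            else β (x + m - pq.2) (γ pq.2 v)) else 0)
          - (if pq.2 = -x then (if 0 ≤ x + m - pq.1 then γ pq.1 (β (x + m - pq.1) v)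
            else β (x + m - pq.1) (γ pq.1 v)) else 0))
      from finsum_congr (fun pq => Tc_beta hgb hgg hbb x m pq.1 pq.2 v),
    finsum_sub_distrib (fin_neg hline1) hline2,
    finsum_neg_distrib,
    finsum_line_fst _ (-x) hhfin, finsum_line_snd _ (-x) hhfin, hT0e,
    finsum_neg2 (fun q => T0 β γ (x + m) q v)]

set_option maxHeartbeats 1000000 in
include hloc hgb hgg hbb hab hJ0' hJm' in
lemma relpmpt (hk : k = κ ^ 2 - 2) (x m : ℤ) (v : M) :
    β x (Jm m v) - Jm m (β x v)
      = 2 • (J0 (x + m) v) + (if x + m = 0 then (x : ℂ) * k else 0) • v := by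
  rw [hJm' m v, hJm' m (β x v), map_add, map_sub, map_neg, map_smul, map_smul]
  have hC' : β x (∑ᶠ pq : ℤ × ℤ, Tc β γ m pq v)
      = (-(∑ᶠ q : ℤ, T0 β γ (x + m) q v) - ∑ᶠ q : ℤ, T0 β γ (x + m) q v)
        + ∑ᶠ pq : ℤ × ℤ, Tc β γ m pq (β x v) :=
    sub_eq_iff_eq_add.mp (commβC hloc hgb hgg hbb x m v)
  have hG' : β x (∑ᶠ q : ℤ, Tg a γ m q v)
      = (-(a (x + m) v)) + ∑ᶠ q : ℤ, Tg a γ m q (β x v) :=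
    sub_eq_iff_eq_add.mp (commβG hloc hgb hab x m v)
  rw [hC', hG', hbg hgb m x v, hJ0' (x + m) v]
  by_cases hxm : x + m = 0
  · have hm : m = -x := by omega
    subst hm
    rw [if_pos hxm, if_pos (by omega : -x + x = 0)]
    subst hk
    match_scalars <;> (push_cast; ring)
  · rw [if_neg hxm, if_neg (by omega), sub_zero]
    match_scalars <;> (push_cast; ring)

end Defs
end Stmt7Aux


open Stmt7Aux in
/-- the Wakimoto free-field construction.  On a module `M` carrying the
Heisenberg/βγ oscillator algebra `𝔴` (with `[γ_m, β_n] = δ_{m+n}`,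
`[a_m, a_n] = (m/2)·δ_{m+n}` and all other commutators zero), with a vacuum `w`
annihilated by `β_n (n ≥ 0)`, `γ_n, a_n (n ≥ 1)` and `a₀ w = κ⁻¹ j · w`, the operators

  `J⁺_n = β_n`,  `J⁰_n = ∑_m :γ_{−m} β_{n+m}: + κ a_n`,
  `J⁻_n = −(:γ²β:)_n − 2κ (:γ∂φ:)_n − k(∂γ)_n`   (with `k = κ² − 2`)

satisfy the affine `sl₂`-hat relations at level `k`, and `w` is a highest weight
vector: `J⁰₀ w = j·w`, `J⁺₀ w = 0`, and `J^a_n w = 0` for all `n > 0`. -/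
theorem stmt7 (M : Type*) [AddCommGroup M] [Module ℂ M]
    (κ j : ℂ) (hκ : κ ≠ 0) (k : ℂ) (hk : k = κ ^ 2 - 2)
    (a β γ : ℤ → Module.End ℂ M)
    (hγβ : ∀ m n : ℤ, γ m * β n - β n * γ m
      = if m + n = 0 then (1 : Module.End ℂ M) else 0)
    (haa : ∀ m n : ℤ, a m * a n - a n * a m
      = (if m + n = 0 then (m : ℂ) / 2 else 0) • (1 : Module.End ℂ M))
    (haβ : ∀ m n : ℤ, a m * β n = β n * a m)
    (haγ : ∀ m n : ℤ, a m * γ n = γ n * a m)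
    (hββ : ∀ m n : ℤ, β m * β n = β n * β m)
    (hγγ : ∀ m n : ℤ, γ m * γ n = γ n * γ m)
    (hloc : ∀ v : M, ∃ N : ℤ, ∀ n : ℤ, N ≤ n → a n v = 0 ∧ β n v = 0 ∧ γ n v = 0)
    (w : M) (hw0 : w ≠ 0)
    (hwa : a 0 w = (κ⁻¹ * j) • w)
    (hwβ : ∀ n : ℤ, 0 ≤ n → β n w = 0)
    (hwγ : ∀ n : ℤ, 1 ≤ n → γ n w = 0)
    (hwa' : ∀ n : ℤ, 1 ≤ n → a n w = 0)
    (Jp Jm J0 : ℤ → Module.End ℂ M)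
    (hJp : ∀ n : ℤ, Jp n = β n)
    (hJ0 : ∀ (n : ℤ) (v : M), J0 n v = κ • a n v +
      ∑ᶠ m : ℤ, (if 0 ≤ n + m then γ (-m) (β (n + m) v) else β (n + m) (γ (-m) v)))
    (hJm : ∀ (n : ℤ) (v : M), Jm n v =
      -(∑ᶠ pq : ℤ × ℤ,
          (if 0 ≤ n - pq.1 - pq.2 then γ pq.1 (γ pq.2 (β (n - pq.1 - pq.2) v))
           else β (n - pq.1 - pq.2) (γ pq.1 (γ pq.2 v))))
      - (2 * κ) • (∑ᶠ m : ℤ, (if 1 ≤ m then γ (n - m) (a m v) else a m (γ (n - m) v)))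
      + (k * n) • γ n v) :
    (∀ n m : ℤ, J0 n * Jp m - Jp m * J0 n = Jp (n + m)) ∧
    (∀ n m : ℤ, J0 n * Jm m - Jm m * J0 n = -Jm (n + m)) ∧
    (∀ n m : ℤ, Jp n * Jm m - Jm m * Jp n
      = 2 • J0 (n + m) + (if n + m = 0 then (n : ℂ) * k else 0) • (1 : Module.End ℂ M)) ∧
    (∀ n m : ℤ, J0 n * J0 m - J0 m * J0 n
      = (if n + m = 0 then (n : ℂ) * k / 2 else 0) • (1 : Module.End ℂ M)) ∧
    J0 0 w = j • w ∧ Jp 0 w = 0 ∧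
    (∀ n : ℤ, 1 ≤ n → Jp n w = 0 ∧ Jm n w = 0 ∧ J0 n w = 0) := by
  classical
  -- pointwise forms of the commutation relations
  have hgb : ∀ i j (v : M), γ i (β j v) = β j (γ i v) + (if i + j = 0 then v else 0) := by
    intro i j v
    have h0 := hγβ i j
    by_cases hc : i + j = 0
    · rw [if_pos hc] at h0
      have h2 : γ i (β j v) - β j (γ i v) = v := by
        have := LinearMap.congr_fun h0 v
        simpa [LinearMap.sub_apply, Module.End.mul_apply, Module.End.one_apply] using this
      rw [if_pos hc]
      exact (sub_eq_iff_eq_add.mp h2).trans (add_comm _ _)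
    · rw [if_neg hc] at h0
      have h2 : γ i (β j v) - β j (γ i v) = 0 := by
        have := LinearMap.congr_fun h0 v
        simpa [LinearMap.sub_apply, Module.End.mul_apply] using this
      rw [if_neg hc, add_zero]
      exact sub_eq_zero.mp h2
  have haa' : ∀ i j (v : M), a i (a j v) = a j (a i v)
      + (if i + j = 0 then ((i : ℂ)/2) else 0) • v := by
    intro i j v
    have h2 : a i (a j v) - a j (a i v) = (if i + j = 0 then ((i : ℂ)/2) else 0) • v := by
      have := LinearMap.congr_fun (haa i j) v
      by_cases hc : i + j = 0
      · rw [if_pos hc] at this ⊢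
        simpa [LinearMap.sub_apply, Module.End.mul_apply, LinearMap.smul_apply,
          Module.End.one_apply] using this
      · rw [if_neg hc] at this ⊢
        simpa [LinearMap.sub_apply, Module.End.mul_apply] using this
    exact (sub_eq_iff_eq_add.mp h2).trans (add_comm _ _)
  have hbb : ∀ i j (v : M), β i (β j v) = β j (β i v) :=
    fun i j v => LinearMap.congr_fun (hββ i j) v
  have hgg : ∀ i j (v : M), γ i (γ j v) = γ j (γ i v) :=
    fun i j v => LinearMap.congr_fun (hγγ i j) v
  have hab : ∀ i j (v : M), a i (β j v) = β j (a i v) :=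
    fun i j v => LinearMap.congr_fun (haβ i j) v
  have hag : ∀ i j (v : M), a i (γ j v) = γ j (a i v) :=
    fun i j v => LinearMap.congr_fun (haγ i j) v
  have hJ0' : ∀ (n : ℤ) (v : M), J0 n v = κ • a n v + ∑ᶠ q : ℤ, T0 β γ n q v :=
    fun n v => hJ0 n v
  have hJm' : ∀ (m : ℤ) (v : M), Jm m v
      = -(∑ᶠ pq : ℤ × ℤ, Tc β γ m pq v) - (2 * κ) • (∑ᶠ q : ℤ, Tg a γ m q v)
        + (k * m) • γ m v :=
    fun m v => hJm m v
  have hsum0 : ∀ n : ℤ, 0 ≤ n → (∑ᶠ q : ℤ, T0 β γ n q w) = 0 := by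
    intro n hn
    rw [finsum_congr (fun q => ?_), finsum_zero]
    rw [T0]
    split_ifs with h
    · rw [hwβ (n + q) h, map_zero]
    · rw [hwγ (-q) (by omega), map_zero]
  refine ⟨?_, ?_, ?_, ?_, ?_, ?_, ?_⟩
  · -- [J0, J+]
    intro n m
    ext v
    simp only [LinearMap.sub_apply, Module.End.mul_apply, hJp]
    rw [commJ0β hloc hgb hbb hab hJ0' n m v]
    abel
  · -- [J0, J-]
    intro n m
    ext v
    simp only [LinearMap.sub_apply, Module.End.mul_apply, LinearMap.neg_apply]
    exact rel0mpt hloc hgb hgg hbb hab hag haa' hJ0' hJm' hk n m v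
  · -- [J+, J-]
    intro n m
    ext v
    simp only [LinearMap.sub_apply, Module.End.mul_apply, LinearMap.add_apply,
      LinearMap.smul_apply, Module.End.one_apply, hJp]
    exact relpmpt hloc hgb hgg hbb hab hJ0' hJm' hk n m v
  · -- [J0, J0]
    intro n m
    ext v
    simp only [LinearMap.sub_apply, Module.End.mul_apply, LinearMap.smul_apply,
      Module.End.one_apply]
    rw [rel00pt hloc hgb hgg hbb hab hag haa' hJ0' n m v]
    by_cases hnm : n + m = 0
    · rw [if_pos hnm, if_pos hnm, hk]
      match_scalars
      ring
    · rw [if_neg hnm, if_neg hnm]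
  · -- J0 0 w = j w
    rw [hJ0' 0 w, hsum0 0 le_rfl, add_zero, hwa, smul_smul, ← mul_assoc,
      mul_inv_cancel₀ hκ, one_mul]
  · -- J+ 0 w = 0
    rw [hJp]
    exact hwβ 0 le_rfl
  · -- positive modes kill w
    intro n hn
    refine ⟨by rw [hJp]; exact hwβ n (by omega), ?_, ?_⟩
    · rw [hJm' n w]
      have hC0 : (∑ᶠ pq : ℤ × ℤ, Tc β γ n pq w) = 0 := by
        rw [finsum_congr (fun pq => ?_), finsum_zero]
        rw [Tc]
        split_ifs with h
        · rw [hwβ _ h, map_zero, map_zero]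
        · by_cases hq2 : 1 ≤ pq.2
          · rw [hwγ _ hq2, map_zero, map_zero]
          · rw [hgg pq.1 pq.2 w, hwγ pq.1 (by omega), map_zero, map_zero]
      have hG0 : (∑ᶠ q : ℤ, Tg a γ n q w) = 0 := by
        rw [finsum_congr (fun q => ?_), finsum_zero]
        rw [Tg]
        split_ifs with h
        · rw [hwa' q h, map_zero]
        · rw [hwγ (n - q) (by omega), map_zero]
      rw [hC0, hG0, hwγ n hn]
      simp
    · rw [hJ0' n w, hwa' n hn, hsum0 n (by omega), smul_zero, add_zero]
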